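/- arXiv:1510.00911 — 2 statements merged into one kernel-verified Lean document; each statement's English description precedes it below -/
import Mathlib

section
/- Every subautomaton of a principal subautomaton of a retractable automaton is itself a principal subautomaton. -/
universe u v

/-- The transition function extended to words (`X*`). -/
def deltaStar {A X : Type*} (δ : A → X → A) : A → List X → A
  | a, [] => a
  | a, x :: p => deltaStar δ (δ a x) p

/-- `B` is a subautomaton of the automaton with transition `δ`. -/
def IsSubaut {A X : Type*} (δ : A → X → A) (B : Set A) : Prop :=
  B.Nonempty ∧ ∀ b ∈ B, ∀ x : X, δ b x ∈ B

/-- `φ` is a retract homomorphism of the automaton onto the subautomaton `B`: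
a homomorphism of `A` onto `B` leaving the elements of `B` fixed. -/
def IsRetractHom {A X : Type*} (δ : A → X → A) (B : Set A) (φ : A → A) : Prop :=
  (∀ a, φ a ∈ B) ∧ (∀ b ∈ B, φ b = b) ∧ ∀ a x, φ (δ a x) = δ (φ a) x

/-- `B` is a retract subautomaton. -/
def IsRetract {A X : Type*} (δ : A → X → A) (B : Set A) : Prop :=
  ∃ φ, IsRetractHom δ B φ

/-- An automaton is retractable if every subautomaton is retract. -/
def Retractable {A X : Type*} (δ : A → X → A) : Prop :=
  ∀ B, IsSubaut δ B → IsRetract δ B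

/-- Retractability of the subautomaton on the carrier `D` (homomorphisms are
represented by functions on the ambient state set, restricted to `D`). -/
def RetractableOn {A X : Type*} (δ : A → X → A) (D : Set A) : Prop :=
  ∀ C ⊆ D, IsSubaut δ C →
    ∃ φ : A → A, (∀ a ∈ D, φ a ∈ C) ∧ (∀ c ∈ C, φ c = c) ∧
      ∀ a ∈ D, ∀ x, φ (δ a x) = δ (φ a) x

/-- The principal subautomaton `R(a) = δ(a, X*)` generated by `a`. -/
def Rset {A X : Type*} (δ : A → X → A) (a : A) : Set A :=
  {b | ∃ p : List X, deltaStar δ a p = b}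

/-- The `R`-class `R_a = {b : R(b) = R(a)}`. -/
def Rclass {A X : Type*} (δ : A → X → A) (a : A) : Set A :=
  {b | Rset δ b = Rset δ a}

/-- `R[a] = R(a) − R_a`. -/
def Rideal {A X : Type*} (δ : A → X → A) (a : A) : Set A :=
  Rset δ a \ Rclass δ a

/-- The Rees congruence induced by `B`: two states are related iff they are
equal or both lie in `B`. -/
def reesRel {A : Type*} (B : Set A) (u v : A) : Prop :=
  u = v ∨ (u ∈ B ∧ v ∈ B)

/-- A minimal subautomaton: a subautomaton with no proper subautomaton. -/
def IsMinimalSubaut {A X : Type*} (δ : A → X → A) (B : Set A) : Prop :=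
  IsSubaut δ B ∧ ∀ C ⊆ B, IsSubaut δ C → C = B

/-- The automaton has a kernel: a subautomaton contained in every subautomaton. -/
def HasKernel {A X : Type*} (δ : A → X → A) : Prop :=
  ∃ K, IsSubaut δ K ∧ ∀ B, IsSubaut δ B → K ⊆ B

/-- The principal factor `R{a}` (the Rees factor of `R(a)` modulo `R[a]`,
described via the Rees congruence) is strongly connected. -/
def FactorSC {A X : Type*} (δ : A → X → A) (a : A) : Prop :=
  ∀ b ∈ Rset δ a, ∀ c ∈ Rset δ a,
    ∃ p : List X, p ≠ [] ∧ reesRel (Rideal δ a) (deltaStar δ b p) c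

/-- The principal factor `R{a}` is a strongly trap-connected non-trivial
one-trap automaton (with trap the class of `t`). -/
def FactorSTC {A X : Type*} (δ : A → X → A) (a : A) : Prop :=
  ∃ t ∈ Rset δ a,
    (∀ x, reesRel (Rideal δ a) (δ t x) t) ∧
    (∃ b ∈ Rset δ a, ¬ reesRel (Rideal δ a) b t) ∧
    (∀ b ∈ Rset δ a, (∀ x, reesRel (Rideal δ a) (δ b x) b) → reesRel (Rideal δ a) b t) ∧
    (∀ b ∈ Rset δ a, ∀ c ∈ Rset δ a, ¬ reesRel (Rideal δ a) b t →
      ∃ p : List X, p ≠ [] ∧ reesRel (Rideal δ a) (deltaStar δ b p) c)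

/-- The principal factor `R{a}` is a strongly trapped non-trivial one-trap
automaton (with trap the class of `t`). -/
def FactorST {A X : Type*} (δ : A → X → A) (a : A) : Prop :=
  ∃ t ∈ Rset δ a,
    (∃ b ∈ Rset δ a, ¬ reesRel (Rideal δ a) b t) ∧
    (∀ b ∈ Rset δ a, (∀ x, reesRel (Rideal δ a) (δ b x) b) → reesRel (Rideal δ a) b t) ∧
    (∀ b ∈ Rset δ a, ∀ x, reesRel (Rideal δ a) (δ b x) t)

/-- Semiconnected: every principal factor is strongly connected or strongly
trap-connected. -/
def Semiconnected {A X : Type*} (δ : A → X → A) : Prop :=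
  ∀ a, FactorSC δ a ∨ FactorSTC δ a

/-- The subautomaton on `D` is semiconnected, via the characterization: for
every subautomaton `C ⊆ D` and every `a ∈ C` there are `b ∈ C` and a nonempty
word `p` with `a = δ(b,p)`. -/
def SemiconnectedOn {A X : Type*} (δ : A → X → A) (D : Set A) : Prop :=
  ∀ C ⊆ D, IsSubaut δ C → ∀ a ∈ C, ∃ b ∈ C, ∃ p : List X, p ≠ [] ∧ deltaStar δ b p = a

/-- The automaton is a dilation of its subautomaton `B`. -/
def IsDilationOf {A X : Type*} (δ : A → X → A) (B : Set A) : Prop :=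
  IsSubaut δ B ∧ ∃ φ : A → A, (∀ a, φ a ∈ B) ∧ (∀ b ∈ B, φ b = b) ∧
    ∀ a x, δ a x = δ (φ a) x

/-- Extension of a partial transition function (`none` = the removed trap)
to words. -/
def pStar {C X : Type*} (d : C → X → Option C) : C → List X → Option C
  | a, [] => some a
  | a, x :: p => (d a x).bind fun b => pStar d b p

/-- The data of the Construction: a finite tree `(T, le)` with least element
`i0`; `C i` is the trap-removed part `A⁰ᵢ` of the automaton `Aᵢ`, with partial
transition `d i` (`none` means the trap); `A_{i0}` is strongly connected and
the other `Aᵢ` are non-trivial strongly trap-connected one-trap automata;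
`Φ i j` are the composite partial homomorphisms along covering chains
(given here as coherent data whose covering components satisfy conditions
(ii) and (iii)); `δ'` is the glued transition function on `A = ⋃ A⁰ᵢ`. -/
def ConstructionSpec {X : Type*} (T : Type*) (le : T → T → Prop) (i0 : T)
    (C : T → Type*) (d : ∀ i, C i → X → Option (C i))
    (Φ : ∀ i j, le j i → C i → C j)
    (δ' : (Σ i, C i) → X → Σ i, C i) : Prop :=
  (∀ i, le i i) ∧ (∀ i j, le i j → le j i → i = j) ∧
  (∀ i j k, le i j → le j k → le i k) ∧
  Finite T ∧
  (∀ S : Set T, S.Nonempty → (∃ u, ∀ i ∈ S, le i u) → ∃ g ∈ S, ∀ i ∈ S, le i g) ∧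
  (∀ i, le i0 i) ∧
  Nonempty (C i0) ∧
  (∀ (a : C i0) (x : X), (d i0 a x).isSome) ∧
  (∀ a b : C i0, ∃ p : List X, p ≠ [] ∧ pStar (d i0) a p = some b) ∧
  (∀ i, i ≠ i0 → Nonempty (C i) ∧
    (∀ a b : C i, ∃ p : List X, p ≠ [] ∧ pStar (d i) a p = some b) ∧
    (∀ a : C i, ∃ p : List X, p ≠ [] ∧ pStar (d i) a p = none)) ∧
  (∀ i (h : le i i) (a : C i), Φ i i h a = a) ∧
  (∀ i j k (h1 : le j i) (h2 : le k j) (h3 : le k i) (a : C i),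
    Φ j k h2 (Φ i j h1 a) = Φ i k h3 a) ∧
  (∀ i j (h : le j i), i ≠ j → (∀ k, le j k → le k i → k = j ∨ k = i) →
    (∀ (a : C i) (x : X) (b : C i),
      d i a x = some b → d j (Φ i j h a) x = some (Φ i j h b)) ∧
    ∃ (a : C i) (x : X), d i a x = none ∧ (d j (Φ i j h a) x).isSome) ∧
  (∀ i (a : C i) (x : X), ∃ (j : T) (hj : le j i) (b : C j),
    δ' ⟨i, a⟩ x = ⟨j, b⟩ ∧ d j (Φ i j hj a) x = some b ∧
    ∀ k (hk : le k i), (d k (Φ i k hk a) x).isSome → le k j)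

lemma deltaStar_hom {A X : Type*} (δ : A → X → A) (φ : A → A)
    (hφ : ∀ a x, φ (δ a x) = δ (φ a) x) (a : A) (p : List X) :
    φ (deltaStar δ a p) = deltaStar δ (φ a) p := by
  induction p generalizing a with
  | nil => rfl
  | cons x p ih => simp [deltaStar, ih, hφ]

lemma deltaStar_mem {A X : Type*} (δ : A → X → A) (B : Set A)
    (hB : IsSubaut δ B) (a : A) (ha : a ∈ B) (p : List X) :
    deltaStar δ a p ∈ B := by
  induction p generalizing a with
  | nil => exact ha
  | cons x p ih => exact ih _ (hB.2 a ha x)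

/-- Corollary 1: every subautomaton of a principal subautomaton
of a retractable automaton is principal. -/
theorem stmt_2 {A X : Type*} (δ : A → X → A) (h : Retractable δ)
    (b : A) (B : Set A) (hB : IsSubaut δ B) (hsub : B ⊆ Rset δ b) :
    ∃ c : A, B = Rset δ c := by
  obtain ⟨φ, hφ1, hφ2, hφ3⟩ := h B hB
  refine ⟨φ b, Set.Subset.antisymm ?_ ?_⟩
  · intro c hc
    obtain ⟨p, hp⟩ := hsub hc
    exact ⟨p, by rw [← deltaStar_hom δ φ hφ3, hp, hφ2 c hc]⟩
  · rintro c ⟨p, rfl⟩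
    exact deltaStar_mem δ B hB _ (hφ1 b) p
end

section
/- If a_1, a_2 are states of a state-finite retractable automaton A with B_1 ⊆ R(a_1) and B_2 ⊆ R(a_2) for distinct minimal subautomata B_1, B_2 of A, then R(a_1) ∩ R(a_2) = ∅. -/
universe u v

lemma deltaStar_append' {A X : Type*} (δ : A → X → A) (a : A) (p q : List X) :
    deltaStar δ a (p ++ q) = deltaStar δ (deltaStar δ a p) q := by
  induction p generalizing a with
  | nil => rfl
  | cons x p ih => simp [deltaStar, ih]

lemma subaut_closed_deltaStar {A X : Type*} {δ : A → X → A} {B : Set A}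
    (hB : IsSubaut δ B) {b : A} (hb : b ∈ B) (p : List X) : deltaStar δ b p ∈ B := by
  induction p generalizing b with
  | nil => exact hb
  | cons x p ih => exact ih (hB.2 b hb x)

lemma Rset_isSubaut {A X : Type*} (δ : A → X → A) (a : A) : IsSubaut δ (Rset δ a) := by
  refine ⟨⟨a, [], rfl⟩, ?_⟩
  rintro b ⟨p, rfl⟩ x
  exact ⟨p ++ [x], by rw [deltaStar_append']; rfl⟩

lemma Rset_mono {A X : Type*} (δ : A → X → A) {a b : A} (h : b ∈ Rset δ a) :
    Rset δ b ⊆ Rset δ a := by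
  obtain ⟨p, rfl⟩ := h
  rintro c ⟨q, rfl⟩
  exact ⟨p ++ q, by rw [deltaStar_append']⟩

lemma hom_deltaStar {A X : Type*} {δ : A → X → A} {φ : A → A}
    (hφ : ∀ a x, φ (δ a x) = δ (φ a) x) (a : A) (p : List X) :
    φ (deltaStar δ a p) = deltaStar δ (φ a) p := by
  induction p generalizing a with
  | nil => rfl
  | cons x p ih => simp [deltaStar, ih, hφ]

lemma exists_minimal_subaut {A X : Type*} [Finite A] (δ : A → X → A) :
    ∀ S : Set A, IsSubaut δ S → ∃ M ⊆ S, IsMinimalSubaut δ M := by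
  intro S hS
  obtain ⟨n, hn⟩ : ∃ n, S.ncard = n := ⟨_, rfl⟩
  induction n using Nat.strong_induction_on generalizing S with
  | _ n ih =>
    by_cases hmin : ∀ C ⊆ S, IsSubaut δ C → C = S
    · exact ⟨S, subset_rfl, hS, hmin⟩
    · push_neg at hmin
      obtain ⟨C, hCS, hC, hCne⟩ := hmin
      have hlt : C.ncard < n := by
        subst hn
        exact Set.ncard_lt_ncard (hCS.ssubset_of_ne hCne) S.toFinite
      obtain ⟨M, hMC, hM⟩ := ih C.ncard hlt C hC rfl
      exact ⟨M, hMC.trans hCS, hM⟩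

lemma minimal_eq_of_inter {A X : Type*} {δ : A → X → A} {B C : Set A}
    (hB : IsMinimalSubaut δ B) (hC : IsMinimalSubaut δ C)
    (h : (B ∩ C).Nonempty) : B = C := by
  have hsub : IsSubaut δ (B ∩ C) :=
    ⟨h, fun b hb x => ⟨hB.1.2 b hb.1 x, hC.1.2 b hb.2 x⟩⟩
  have h1 := hB.2 (B ∩ C) Set.inter_subset_left hsub
  have h2 := hC.2 (B ∩ C) Set.inter_subset_right hsub
  exact h1.symm.trans h2

lemma minimal_unique_in_Rset {A X : Type*} {δ : A → X → A}
    (h : Retractable δ) (a : A) {B M : Set A}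
    (hB : IsMinimalSubaut δ B) (hM : IsMinimalSubaut δ M)
    (hBa : B ⊆ Rset δ a) (hMa : M ⊆ Rset δ a) : B = M := by
  have hU : IsSubaut δ (B ∪ M) := by
    refine ⟨hB.1.1.mono Set.subset_union_left, ?_⟩
    rintro b (hb | hb) x
    · exact Or.inl (hB.1.2 b hb x)
    · exact Or.inr (hM.1.2 b hb x)
  obtain ⟨φ, hφ1, hφ2, hφ3⟩ := h (B ∪ M) hU
  rcases hφ1 a with hfa | hfa
  · -- φ a ∈ B; any m ∈ M lands in B
    obtain ⟨m, hm⟩ := hM.1.1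
    obtain ⟨p, hp⟩ := hMa hm
    have : φ m = deltaStar δ (φ a) p := by rw [← hp, hom_deltaStar hφ3]
    have hmB : m ∈ B := by
      rw [← hφ2 m (Or.inr hm), this]
      exact subaut_closed_deltaStar hB.1 hfa p
    exact minimal_eq_of_inter hB hM ⟨m, hmB, hm⟩
  · obtain ⟨b, hb⟩ := hB.1.1
    obtain ⟨p, hp⟩ := hBa hb
    have : φ b = deltaStar δ (φ a) p := by rw [← hp, hom_deltaStar hφ3]
    have hbM : b ∈ M := by
      rw [← hφ2 b (Or.inl hb), this]
      exact subaut_closed_deltaStar hM.1 hfa p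
    exact minimal_eq_of_inter hB hM ⟨b, hb, hbM⟩

/-- Lemma 4. -/
theorem stmt_5 {A X : Type*} [Finite A] [Nonempty A] [Nonempty X]
    (δ : A → X → A) (h : Retractable δ) (a₁ a₂ : A) (B₁ B₂ : Set A)
    (hB₁ : IsMinimalSubaut δ B₁) (hB₂ : IsMinimalSubaut δ B₂) (hne : B₁ ≠ B₂)
    (h₁ : B₁ ⊆ Rset δ a₁) (h₂ : B₂ ⊆ Rset δ a₂) :
    Rset δ a₁ ∩ Rset δ a₂ = ∅ := by
  by_contra hc
  obtain ⟨c, hc₁, hc₂⟩ := Set.nonempty_iff_ne_empty.2 hc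
  obtain ⟨M, hMc, hM⟩ := exists_minimal_subaut δ (Rset δ c) (Rset_isSubaut δ c)
  have hM₁ : M ⊆ Rset δ a₁ := hMc.trans (Rset_mono δ hc₁)
  have hM₂ : M ⊆ Rset δ a₂ := hMc.trans (Rset_mono δ hc₂)
  exact hne ((minimal_unique_in_Rset h a₁ hB₁ hM h₁ hM₁).trans
    (minimal_unique_in_Rset h a₂ hB₂ hM h₂ hM₂).symm)
end
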